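/- Let A be a unital C*-algebra and d ≥ 1, with data (w_{i,k}), (u_j), (m_i), (n_j), (c_i), r_k, θ₁, x = Σ_{j∈F} d_j u_j and c_x as in the context, and let ρ ≥ 0 be such that ‖r_k‖ ≤ ρ for all k ∈ ℤ^d. Then for every n ≥ 1 and every tuple ε̄ = (ε₁,…,ε_n) ∈ {−1,0,+1}^n with p := #{l : ε_l = 0}, the sum over all k̄ = (k₁,…,k_n) ∈ (ℤ^d)^n of ‖δ^{ε_n}_{k_n}(⋯(δ^{ε₁}_{k₁}(x))⋯)‖ is at most ρ^p·(2·θ₁·c_x)^n, and in particular is at most (1+ρ)^n·(2·θ₁·c_x)^n. -/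

import Mathlib

open scoped BigOperators

/-- Iterated application of the (signed) derivations
`δ_k(a) = a r_k - r_k a` (sign `+1`), `δ†_k(a) = r_k* a - a r_k*` (sign `-1`),
and the Lindblad map `ℒ_k(a) = (1/2)(δ†_k(a) r_k + r_k* δ_k(a))` (sign `0`),
applied first with index `0` (innermost) and last with index `n-1` (outermost). -/
noncomputable def deltaIter {A K : Type*} [Ring A] [StarRing A] [Module ℂ A]
    (r : K → A) {n : ℕ} (ε : Fin n → ℤ) (k : Fin n → K) (x : A) : A :=
  (List.ofFn fun l : Fin n => fun a : A =>
    if ε l = 1 then a * r (k l) - r (k l) * a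
    else if ε l = -1 then star (r (k l)) * a - a * star (r (k l))
    else (2 : ℂ)⁻¹ • ((star (r (k l)) * a - a * star (r (k l))) * r (k l)
          + star (r (k l)) * (a * r (k l) - r (k l) * a))).foldl (fun a f => f a) x

set_option linter.unusedSectionVars false

section Aux

variable {A K : Type*} [Ring A] [StarRing A] [Module ℂ A] [SMulCommClass ℂ A A]
  [IsScalarTower ℂ A A]

noncomputable def dstep (r : K → A) (e : ℤ) (k : K) (a : A) : A :=
  if e = 1 then a * r k - r k * a
  else if e = -1 then star (r k) * a - a * star (r k)
  else (2 : ℂ)⁻¹ • ((star (r k) * a - a * star (r k)) * r k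
        + star (r k) * (a * r k - r k * a))

theorem deltaIter_eq (r : K → A) {n : ℕ} (ε : Fin n → ℤ) (k : Fin n → K) (x : A) :
    deltaIter r ε k x
      = (List.ofFn fun l : Fin n => dstep r (ε l) (k l)).foldl (fun a f => f a) x := rfl

theorem deltaIter_zero (r : K → A) (ε : Fin 0 → ℤ) (k : Fin 0 → K) (x : A) :
    deltaIter r ε k x = x := rfl

theorem deltaIter_succ (r : K → A) {n : ℕ} (ε : Fin (n+1) → ℤ) (k : Fin (n+1) → K) (x : A) :
    deltaIter r ε k x
      = deltaIter r (fun l => ε l.succ) (fun l => k l.succ) (dstep r (ε 0) (k 0) x) := by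
  rw [deltaIter_eq, deltaIter_eq, List.ofFn_succ, List.foldl_cons]

theorem dstep_add (r : K → A) (e : ℤ) (k : K) (x y : A) :
    dstep r e k (x + y) = dstep r e k x + dstep r e k y := by
  unfold dstep
  split_ifs
  · noncomm_ring
  · noncomm_ring
  · rw [← smul_add]; congr 1; noncomm_ring

theorem dstep_smul (r : K → A) (e : ℤ) (k : K) (c : ℂ) (x : A) :
    dstep r e k (c • x) = c • dstep r e k x := by
  unfold dstep
  split_ifs
  · simp [mul_smul_comm, smul_mul_assoc, smul_sub]
  · simp [mul_smul_comm, smul_mul_assoc, smul_sub]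
  · rw [smul_comm c]
    congr 1
    simp only [mul_smul_comm, smul_mul_assoc, ← smul_sub, ← smul_add]

theorem dstep_zero (r : K → A) (e : ℤ) (k : K) : dstep r e k 0 = 0 := by
  unfold dstep; split_ifs <;> simp

theorem dstep_sum (r : K → A) (e : ℤ) (k : K) {J : Type*} (s : Finset J) (f : J → A) :
    dstep r e k (∑ j ∈ s, f j) = ∑ j ∈ s, dstep r e k (f j) := by
  classical
  induction s using Finset.induction with
  | empty => simp [dstep_zero]
  | insert _ _ hj ih => rw [Finset.sum_insert hj, dstep_add, ih, Finset.sum_insert hj]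

theorem deltaIter_smul (r : K → A) : ∀ {n : ℕ} (ε : Fin n → ℤ) (k : Fin n → K) (c : ℂ) (x : A),
    deltaIter r ε k (c • x) = c • deltaIter r ε k x := by
  intro n
  induction n with
  | zero => intro ε k c x; rfl
  | succ N ih =>
      intro ε k c x
      rw [deltaIter_succ, dstep_smul, ih, ← deltaIter_succ]

theorem deltaIter_sum (r : K → A) {J : Type*} (s : Finset J) :
    ∀ {n : ℕ} (ε : Fin n → ℤ) (k : Fin n → K) (f : J → A),
    deltaIter r ε k (∑ j ∈ s, f j) = ∑ j ∈ s, deltaIter r ε k (f j) := by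
  intro n
  induction n with
  | zero => intro ε k f; rfl
  | succ N ih =>
      intro ε k f
      rw [deltaIter_succ, dstep_sum, ih]
      exact (Finset.sum_congr rfl fun j _ => (deltaIter_succ r ε k (f j)).symm)

def consEquiv (K : Type*) (n : ℕ) : K × (Fin n → K) ≃ (Fin (n+1) → K) where
  toFun p := Fin.cons p.1 p.2
  invFun f := (f 0, fun l => f l.succ)
  left_inv p := by simp
  right_inv f := by
    funext l
    refine Fin.cases ?_ (fun i => ?_) l <;> simp

end Aux

theorem key_lemma {A : Type*} [NormedRing A] [StarRing A] [NormedAlgebra ℂ A]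
    [CStarRing A] [CompleteSpace A] {K : Type*} {I : Type*}
    (w : I → K → A) (hwnorm : ∀ i k, ‖w i k‖ ≤ 1)
    (c : I → ℂ) (hc : Summable fun i => ‖c i‖)
    (r : K → A) (hr : ∀ k, HasSum (fun i => c i • w i k) (r k))
    (ρ : ℝ) (hρ : 0 ≤ ρ) (hrnorm : ∀ k, ‖r k‖ ≤ ρ)
    (S : I → K → Prop)
    (hSfin : ∀ i, (setOf (S i)).Finite)
    (μ : I → ℝ) (hμ : ∀ i, 0 ≤ μ i)
    (hScard : ∀ i, ((setOf (S i)).ncard : ℝ) ≤ μ i)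
    (θ : ℝ) (hθ : HasSum (fun i => ‖c i‖ * μ i) θ)
    (hwcomm : ∀ i k i' k', Commute (w i k) (w i' k'))
    (hwcomms : ∀ i k i' k', Commute (star (w i k)) (w i' k')) :
    ∀ (n : ℕ) (ε : Fin n → ℤ), (∀ l, ε l = 1 ∨ ε l = 0 ∨ ε l = -1) →
    ∀ a : A, (∀ i k, ¬ S i k → Commute (w i k) a ∧ Commute (star (w i k)) a) →
    Summable (fun kb : Fin n → K => ‖deltaIter r ε kb a‖) ∧
    ∑' kb : Fin n → K, ‖deltaIter r ε kb a‖
      ≤ (∏ l, (if ε l = 0 then ρ * (2 * θ) else 2 * θ)) * ‖a‖ := by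
  classical
  have hθ0 : 0 ≤ θ := by
    rw [← hθ.tsum_eq]
    exact tsum_nonneg fun i => mul_nonneg (norm_nonneg _) (hμ i)
  set G : K → ℝ := fun k => ∑' i, ‖c i‖ * (if S i k then (1:ℝ) else 0) with hGdef
  have hGterm_nn : ∀ (k : K) (i : I), 0 ≤ ‖c i‖ * (if S i k then (1:ℝ) else 0) := by
    intro k i
    exact mul_nonneg (norm_nonneg _) (by split_ifs <;> norm_num)
  have hGterm_summable : ∀ k : K, Summable fun i => ‖c i‖ * (if S i k then (1:ℝ) else 0) := by
    intro k
    refine Summable.of_nonneg_of_le (hGterm_nn k) (fun i => ?_) hc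
    calc ‖c i‖ * (if S i k then (1:ℝ) else 0) ≤ ‖c i‖ * 1 :=
          mul_le_mul_of_nonneg_left (by split_ifs <;> norm_num) (norm_nonneg _)
      _ = ‖c i‖ := mul_one _
  have hGnn : ∀ k, 0 ≤ G k := fun k => tsum_nonneg (hGterm_nn k)
  -- slices over k for fixed i
  have hslice : ∀ i : I, Summable (fun k => ‖c i‖ * (if S i k then (1:ℝ) else 0)) ∧
      ∑' k, ‖c i‖ * (if S i k then (1:ℝ) else 0) ≤ ‖c i‖ * μ i := by
    intro i
    set T := (hSfin i).toFinset with hT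
    have hzero : ∀ k ∉ T, ‖c i‖ * (if S i k then (1:ℝ) else 0) = 0 := by
      intro k hk
      have : ¬ S i k := by
        intro hs
        exact hk ((hSfin i).mem_toFinset.mpr hs)
      rw [if_neg this, mul_zero]
    refine ⟨summable_of_ne_finset_zero hzero, ?_⟩
    rw [tsum_eq_sum hzero]
    have hTeq : ∀ k ∈ T, ‖c i‖ * (if S i k then (1:ℝ) else 0) = ‖c i‖ := by
      intro k hk
      have hs : S i k := (hSfin i).mem_toFinset.mp hk
      rw [if_pos hs, mul_one]
    rw [Finset.sum_congr rfl hTeq, Finset.sum_const, nsmul_eq_mul]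
    have hcard : (T.card : ℝ) ≤ μ i := by
      have h := hScard i
      rwa [Set.ncard_eq_toFinset_card _ (hSfin i)] at h
    calc (T.card : ℝ) * ‖c i‖ = ‖c i‖ * T.card := mul_comm _ _
      _ ≤ ‖c i‖ * μ i := mul_le_mul_of_nonneg_left hcard (norm_nonneg _)
  -- double sum
  have hF2nn : (0 : I × K → ℝ) ≤ fun q => ‖c q.1‖ * (if S q.1 q.2 then (1:ℝ) else 0) :=
    fun q => hGterm_nn q.2 q.1
  have hF2 : Summable (fun q : I × K => ‖c q.1‖ * (if S q.1 q.2 then (1:ℝ) else 0)) := by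
    refine (summable_prod_of_nonneg hF2nn).2 ⟨fun i => (hslice i).1, ?_⟩
    refine Summable.of_nonneg_of_le (fun i => tsum_nonneg fun k => hGterm_nn k i)
      (fun i => (hslice i).2) hθ.summable
  have hswap : Summable (fun q : K × I => ‖c q.2‖ * (if S q.2 q.1 then (1:ℝ) else 0)) :=
    ((Equiv.prodComm K I).summable_iff).2 hF2
  have hGsummable : Summable G :=
    ((summable_prod_of_nonneg (fun q => hF2nn (q.2, q.1))).1 hswap).2
  have hGtsum : ∑' k, G k ≤ θ := by
    have e1 : ∑' k, G k = ∑' q : K × I, ‖c q.2‖ * (if S q.2 q.1 then (1:ℝ) else 0) :=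
      (Summable.tsum_prod' hswap fun k => hGterm_summable k).symm
    have e2 : ∑' q : K × I, ‖c q.2‖ * (if S q.2 q.1 then (1:ℝ) else 0)
        = ∑' q : I × K, ‖c q.1‖ * (if S q.1 q.2 then (1:ℝ) else 0) :=
      (Equiv.prodComm K I).tsum_eq (fun q : I × K => ‖c q.1‖ * (if S q.1 q.2 then (1:ℝ) else 0))
    have e3 : ∑' q : I × K, ‖c q.1‖ * (if S q.1 q.2 then (1:ℝ) else 0)
        = ∑' i, ∑' k, ‖c i‖ * (if S i k then (1:ℝ) else 0) :=
      Summable.tsum_prod' hF2 fun i => (hslice i).1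
    have e4 : ∑' i, ∑' k, ‖c i‖ * (if S i k then (1:ℝ) else 0) ≤ ∑' i, ‖c i‖ * μ i :=
      Summable.tsum_le_tsum (fun i => (hslice i).2)
        ((summable_prod_of_nonneg hF2nn).1 hF2).2 hθ.summable
    rw [e1, e2, e3]
    exact e4.trans_eq hθ.tsum_eq
  -- star of algebraMap is central
  have hcentral : ∀ (γ : ℂ) (y : A), Commute (star (algebraMap ℂ A γ)) y := by
    intro γ y
    have h1 : Commute (algebraMap ℂ A γ) (star y) := Algebra.commutes γ (star y)
    have h2 := h1.star_star
    simpa [star_star] using h2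
  -- commuting with sums
  have commute_tsum : ∀ (z t : A) (f : I → A), HasSum f t → (∀ i, Commute z (f i)) →
      Commute z t := by
    intro z t f ht hz
    have h1 : HasSum (fun i => z * f i) (z * t) := ht.mul_left z
    have h2 : HasSum (fun i => f i * z) (t * z) := ht.mul_right z
    have he : (fun i => z * f i) = fun i => f i * z := funext fun i => (hz i).eq
    exact h1.unique (he ▸ h2)
  have commute_r : ∀ (z : A) (k : K), (∀ i, Commute z (w i k)) → Commute z (r k) := by
    intro z k hz
    exact commute_tsum z (r k) _ (hr k) (fun i => (hz i).smul_right (c i))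
  have commute_rs : ∀ (z : A) (k : K), (∀ i, Commute z (star (w i k))) →
      Commute z (star (r k)) := by
    intro z k hz
    refine commute_tsum z (star (r k)) _ ((hr k).star) (fun i => ?_)
    rw [Algebra.smul_def, star_mul]
    exact (hz i).mul_right ((hcentral (c i) z).symm)
  -- core commutator estimate
  have core : ∀ (a : A) (k : K) (f : I → A) (t : A),
      HasSum f t → (∀ i, ‖f i‖ ≤ ‖c i‖) →
      (∀ i, ¬ S i k → Commute (f i) a) →
      ‖a * t - t * a‖ ≤ 2 * ‖a‖ * G k := by
    intro a k f t ht hfn hcm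
    have hsum : HasSum (fun i => a * f i - f i * a) (a * t - t * a) :=
      (ht.mul_left a).sub (ht.mul_right a)
    have hterm : ∀ i, ‖a * f i - f i * a‖
        ≤ 2 * ‖a‖ * (‖c i‖ * (if S i k then (1:ℝ) else 0)) := by
      intro i
      by_cases hik : S i k
      · rw [if_pos hik, mul_one]
        calc ‖a * f i - f i * a‖ ≤ ‖a * f i‖ + ‖f i * a‖ := norm_sub_le _ _
          _ ≤ ‖a‖ * ‖f i‖ + ‖f i‖ * ‖a‖ := add_le_add (norm_mul_le _ _) (norm_mul_le _ _)
          _ ≤ ‖a‖ * ‖c i‖ + ‖c i‖ * ‖a‖ := add_le_add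
              (mul_le_mul_of_nonneg_left (hfn i) (norm_nonneg a))
              (mul_le_mul_of_nonneg_right (hfn i) (norm_nonneg a))
          _ = 2 * ‖a‖ * ‖c i‖ := by ring
      · rw [(hcm i hik).eq, sub_self, norm_zero, if_neg hik, mul_zero, mul_zero]
    have hmaj_summable :
        Summable (fun i => 2 * ‖a‖ * (‖c i‖ * (if S i k then (1:ℝ) else 0))) :=
      (hGterm_summable k).mul_left _
    have hnorm_summable : Summable (fun i => ‖a * f i - f i * a‖) :=
      Summable.of_nonneg_of_le (fun i => norm_nonneg _) hterm hmaj_summable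
    calc ‖a * t - t * a‖ = ‖∑' i, (a * f i - f i * a)‖ := by rw [hsum.tsum_eq]
      _ ≤ ∑' i, ‖a * f i - f i * a‖ := norm_tsum_le_tsum_norm hnorm_summable
      _ ≤ ∑' i, 2 * ‖a‖ * (‖c i‖ * (if S i k then (1:ℝ) else 0)) :=
          Summable.tsum_le_tsum hterm hnorm_summable hmaj_summable
      _ = 2 * ‖a‖ * G k := tsum_mul_left
  -- the Good predicate
  set GoodP : A → Prop :=
    fun a => ∀ i k, ¬ S i k → Commute (w i k) a ∧ Commute (star (w i k)) a with hGoodP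
  have hδ : ∀ a, GoodP a → ∀ k, ‖a * r k - r k * a‖ ≤ 2 * ‖a‖ * G k := by
    intro a ha k
    refine core a k (fun i => c i • w i k) (r k) (hr k) (fun i => ?_)
      (fun i h => ((ha i k h).1).smul_left (c i))
    calc ‖c i • w i k‖ ≤ ‖c i‖ * ‖w i k‖ := norm_smul_le _ _
      _ ≤ ‖c i‖ * 1 := mul_le_mul_of_nonneg_left (hwnorm i k) (norm_nonneg _)
      _ = ‖c i‖ := mul_one _
  have hδs : ∀ a, GoodP a → ∀ k, ‖star (r k) * a - a * star (r k)‖ ≤ 2 * ‖a‖ * G k := by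
    intro a ha k
    have h := core a k (fun i => star (c i • w i k)) (star (r k))
      ((hr k).star)
      (fun i => by
        rw [norm_star]
        calc ‖c i • w i k‖ ≤ ‖c i‖ * ‖w i k‖ := norm_smul_le _ _
          _ ≤ ‖c i‖ * 1 := mul_le_mul_of_nonneg_left (hwnorm i k) (norm_nonneg _)
          _ = ‖c i‖ := mul_one _)
      (fun i h => by
        show Commute (star (c i • w i k)) a
        rw [Algebra.smul_def, star_mul]
        exact ((ha i k h).2).mul_left (hcentral (c i) a))
    rwa [norm_sub_rev] at h
  have hGoodstep : ∀ (e : ℤ) (k : K) (a : A), GoodP a → GoodP (dstep r e k a) := by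
    intro e k0 a ha i k h
    have cw : Commute (w i k) a := (ha i k h).1
    have csw : Commute (star (w i k)) a := (ha i k h).2
    have crw : Commute (w i k) (r k0) := commute_r _ _ (fun i' => hwcomm i k i' k0)
    have crsw : Commute (w i k) (star (r k0)) :=
      commute_rs _ _ (fun i' => (hwcomms i' k0 i k).symm)
    have csrw : Commute (star (w i k)) (r k0) := commute_r _ _ (fun i' => hwcomms i k i' k0)
    have csrsw : Commute (star (w i k)) (star (r k0)) :=
      commute_rs _ _ (fun i' => (hwcomm i k i' k0).star_star)
    constructor <;>
      · unfold dstep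
        split_ifs
        · first
            | exact (cw.mul_right crw).sub_right (crw.mul_right cw)
            | exact (csw.mul_right csrw).sub_right (csrw.mul_right csw)
        · first
            | exact (crsw.mul_right cw).sub_right (cw.mul_right crsw)
            | exact (csrsw.mul_right csw).sub_right (csw.mul_right csrsw)
        · first
            | exact ((((crsw.mul_right cw).sub_right (cw.mul_right crsw)).mul_right crw).add_right
                (crsw.mul_right ((cw.mul_right crw).sub_right (crw.mul_right cw)))).smul_right _
            | exact ((((csrsw.mul_right csw).sub_right (csw.mul_right csrsw)).mul_right
                csrw).add_right
                (csrsw.mul_right ((csw.mul_right csrw).sub_right (csrw.mul_right csw)))).smul_right _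
  -- pointwise step bound
  have hhalf : ‖(2 : ℂ)⁻¹‖ = (2:ℝ)⁻¹ := by
    rw [norm_inv]
    norm_num
  have hstep_pt : ∀ (e : ℤ) (a : A), GoodP a → (e = 1 ∨ e = 0 ∨ e = -1) → ∀ k,
      ‖dstep r e k a‖ ≤ (if e = 0 then 2 * ρ * ‖a‖ else 2 * ‖a‖) * G k := by
    intro e a ha he k
    rcases he with h | h | h
    · subst h
      rw [if_neg (by norm_num)]
      unfold dstep
      rw [if_pos rfl]
      have := hδ a ha k
      calc ‖a * r k - r k * a‖ ≤ 2 * ‖a‖ * G k := this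
        _ = 2 * ‖a‖ * G k := rfl
    · subst h
      rw [if_pos rfl]
      unfold dstep
      rw [if_neg (by norm_num), if_neg (by norm_num)]
      have hX := hδs a ha k
      have hY := hδ a ha k
      have hrk := hrnorm k
      have hrsk : ‖star (r k)‖ ≤ ρ := (norm_star _).trans_le (hrnorm k)
      have h1 : ‖(star (r k) * a - a * star (r k)) * r k‖ ≤ (2 * ‖a‖ * G k) * ρ := by
        calc ‖(star (r k) * a - a * star (r k)) * r k‖
            ≤ ‖star (r k) * a - a * star (r k)‖ * ‖r k‖ := norm_mul_le _ _
          _ ≤ (2 * ‖a‖ * G k) * ρ :=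
              mul_le_mul hX hrk (norm_nonneg _) (by have := hGnn k; positivity)
      have h2 : ‖star (r k) * (a * r k - r k * a)‖ ≤ ρ * (2 * ‖a‖ * G k) := by
        calc ‖star (r k) * (a * r k - r k * a)‖
            ≤ ‖star (r k)‖ * ‖a * r k - r k * a‖ := norm_mul_le _ _
          _ ≤ ρ * (2 * ‖a‖ * G k) :=
              mul_le_mul hrsk hY (norm_nonneg _) hρ
      calc ‖(2:ℂ)⁻¹ • ((star (r k) * a - a * star (r k)) * r k
              + star (r k) * (a * r k - r k * a))‖
          = (2:ℝ)⁻¹ * ‖(star (r k) * a - a * star (r k)) * r k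
              + star (r k) * (a * r k - r k * a)‖ := by rw [norm_smul, hhalf]
        _ ≤ (2:ℝ)⁻¹ * ((2 * ‖a‖ * G k) * ρ + ρ * (2 * ‖a‖ * G k)) := by
            refine mul_le_mul_of_nonneg_left ?_ (by norm_num)
            exact (norm_add_le _ _).trans (add_le_add h1 h2)
        _ = 2 * ρ * ‖a‖ * G k := by ring
    · subst h
      rw [if_neg (by norm_num)]
      unfold dstep
      rw [if_neg (by norm_num), if_pos rfl]
      exact hδs a ha k
  -- summed step bound
  have hstep : ∀ (e : ℤ) (a : A), GoodP a → (e = 1 ∨ e = 0 ∨ e = -1) →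
      Summable (fun k => ‖dstep r e k a‖) ∧
      ∑' k, ‖dstep r e k a‖ ≤ (if e = 0 then ρ * (2 * θ) else 2 * θ) * ‖a‖ := by
    intro e a ha he
    set B : ℝ := if e = 0 then 2 * ρ * ‖a‖ else 2 * ‖a‖ with hB
    have hBnn : 0 ≤ B := by
      rw [hB]; split_ifs <;> positivity
    have hpt : ∀ k, ‖dstep r e k a‖ ≤ B * G k := hstep_pt e a ha he
    have hMsum : Summable fun k => B * G k := hGsummable.mul_left B
    have hsm : Summable fun k => ‖dstep r e k a‖ :=
      Summable.of_nonneg_of_le (fun k => norm_nonneg _) hpt hMsum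
    refine ⟨hsm, ?_⟩
    calc ∑' k, ‖dstep r e k a‖ ≤ ∑' k, B * G k := Summable.tsum_le_tsum hpt hsm hMsum
      _ = B * ∑' k, G k := tsum_mul_left
      _ ≤ B * θ := mul_le_mul_of_nonneg_left hGtsum hBnn
      _ = (if e = 0 then ρ * (2 * θ) else 2 * θ) * ‖a‖ := by
          rw [hB]; split_ifs <;> ring
  -- main induction
  intro n
  induction n with
  | zero =>
      intro ε hε a ha
      constructor
      · exact Summable.of_finite
      · rw [tsum_eq_single (fun l : Fin 0 => l.elim0)
          (fun b' hb' => absurd (Subsingleton.elim b' _) hb')]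
        simp [deltaIter_zero]
  | succ N ih =>
      intro ε hε a ha
      set a' : K → A := fun k0 => dstep r (ε 0) k0 a with ha'def
      have ha' : ∀ k0, GoodP (a' k0) := fun k0 => hGoodstep _ _ _ ha
      have hIH := fun k0 => ih (fun l => ε l.succ) (fun l => hε l.succ) (a' k0) (ha' k0)
      have hstep0 := hstep (ε 0) a ha (hε 0)
      set P : ℝ := ∏ l : Fin N, (if ε l.succ = 0 then ρ * (2 * θ) else 2 * θ) with hP
      have hPnn : 0 ≤ P := Finset.prod_nonneg fun l _ => by split_ifs <;> positivity
      set g : K × (Fin N → K) → ℝ :=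
        fun q => ‖deltaIter r (fun l => ε l.succ) q.2 (a' q.1)‖ with hg
      have hgnn : (0 : K × (Fin N → K) → ℝ) ≤ g := fun q => norm_nonneg _
      have hg1 : ∀ k0, Summable fun y => g (k0, y) := fun k0 => (hIH k0).1
      have hg2' : ∀ k0, ∑' y, g (k0, y) ≤ P * ‖a' k0‖ := fun k0 => (hIH k0).2
      have hmaj : Summable fun k0 => P * ‖a' k0‖ := hstep0.1.mul_left P
      have hg2 : Summable fun k0 => ∑' y, g (k0, y) :=
        Summable.of_nonneg_of_le (fun k0 => tsum_nonneg fun y => norm_nonneg _) hg2' hmaj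
      have hgsum : Summable g := (summable_prod_of_nonneg hgnn).2 ⟨hg1, hg2⟩
      set eqv : K × (Fin N → K) ≃ (Fin (N+1) → K) := consEquiv K N with heqv
      have hcomp : ∀ q, ‖deltaIter r ε (eqv q) a‖ = g q := by
        intro q
        rw [deltaIter_succ]
        simp only [hg, ha'def, heqv, consEquiv, Equiv.coe_fn_mk, Fin.cons_zero, Fin.cons_succ]
      have hcompf : (fun kb : Fin (N+1) → K => ‖deltaIter r ε kb a‖) ∘ eqv = g :=
        funext hcomp
      constructor
      · exact eqv.summable_iff.mp (hcompf ▸ hgsum)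
      · have ht1 : ∑' kb : Fin (N+1) → K, ‖deltaIter r ε kb a‖ = ∑' q, g q := by
          rw [← eqv.tsum_eq (fun kb : Fin (N+1) → K => ‖deltaIter r ε kb a‖)]
          exact tsum_congr hcomp
        rw [ht1, Summable.tsum_prod' hgsum hg1]
        calc ∑' k0, ∑' y, g (k0, y) ≤ ∑' k0, P * ‖a' k0‖ := Summable.tsum_le_tsum hg2' hg2 hmaj
          _ = P * ∑' k0, ‖a' k0‖ := tsum_mul_left
          _ ≤ P * ((if ε 0 = 0 then ρ * (2 * θ) else 2 * θ) * ‖a‖) :=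
              mul_le_mul_of_nonneg_left hstep0.2 hPnn
          _ = (∏ l : Fin (N+1), (if ε l = 0 then ρ * (2 * θ) else 2 * θ)) * ‖a‖ := by
              rw [Fin.prod_univ_succ]
              ring


/-- Lemma 3.1(iii): for signs `ε_l ∈ {-1, 0, +1}` with `p` zeros, the sum over all tuples
`k̄ ∈ (ℤ^d)^n` of `‖δ^{ε_n}_{k_n}(⋯(δ^{ε₁}_{k₁}(x))⋯)‖` is at most `ρ^p (2 θ₁ c_x)^n`,
and in particular at most `(1+ρ)^n (2 θ₁ c_x)^n`. -/
theorem lemma31iii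
    {A : Type*} [NormedRing A] [StarRing A] [CStarRing A] [NormedAlgebra ℂ A]
    [CompleteSpace A]
    {I J : Type*} [Countable I]
    (d : ℕ) (hd : 1 ≤ d)
    (w : I → (Fin d → ℤ) → A) (hwnorm : ∀ i k, ‖w i k‖ ≤ 1)
    (hwcomm : ∀ i k i' k', Commute (w i k) (w i' k'))
    (hwcommstar : ∀ i k i' k', Commute (star (w i k)) (w i' k'))
    (u : J → A) (hunorm : ∀ j, ‖u j‖ ≤ 1)
    (m : I → ℝ) (hm : ∀ i, 0 ≤ m i) (ν : J → ℝ) (hν : ∀ j, 0 ≤ ν j)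
    (hfin : ∀ i j,
      ({k : Fin d → ℤ | w i k * u j ≠ u j * w i k ∨
          star (w i k) * u j ≠ u j * star (w i k)}).Finite ∧
        (({k : Fin d → ℤ | w i k * u j ≠ u j * w i k ∨
            star (w i k) * u j ≠ u j * star (w i k)}).ncard : ℝ) ≤ m i * ν j)
    (c : I → ℂ) (hc : Summable fun i => ‖c i‖)
    (θ₁ : ℝ) (hθ : HasSum (fun i => ‖c i‖ * m i) θ₁)
    (r : (Fin d → ℤ) → A) (hr : ∀ k, HasSum (fun i => c i • w i k) (r k))
    (ρ : ℝ) (hρ : 0 ≤ ρ) (hrnorm : ∀ k, ‖r k‖ ≤ ρ)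
    (F : Finset J) (dcoef : J → ℂ) (x : A) (hx : x = ∑ j ∈ F, dcoef j • u j)
    (cx : ℝ) (hcx1 : 1 ≤ cx)
    (hcx : ∀ M : ℕ, 1 ≤ M → ∑ j ∈ F, ‖dcoef j‖ * ν j ^ M ≤ cx ^ M)
    (n : ℕ) (hn : 1 ≤ n) (ε : Fin n → ℤ)
    (hε : ∀ l, ε l = 1 ∨ ε l = 0 ∨ ε l = -1)
    (p : ℕ) (hp : p = (Finset.univ.filter fun l : Fin n => ε l = 0).card) :
    Summable (fun kbar : Fin n → (Fin d → ℤ) => ‖deltaIter r ε kbar x‖) ∧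
      (∑' kbar : Fin n → (Fin d → ℤ), ‖deltaIter r ε kbar x‖
          ≤ ρ ^ p * (2 * θ₁ * cx) ^ n) ∧
      ∑' kbar : Fin n → (Fin d → ℤ), ‖deltaIter r ε kbar x‖
          ≤ (1 + ρ) ^ n * (2 * θ₁ * cx) ^ n := by
    classical
  have hθ0 : 0 ≤ θ₁ := by
    rw [← hθ.tsum_eq]
    exact tsum_nonneg fun i => mul_nonneg (norm_nonneg _) (hm i)
  have hpn : p ≤ n := by
    rw [hp]
    calc (Finset.univ.filter fun l : Fin n => ε l = 0).card
        ≤ (Finset.univ : Finset (Fin n)).card := Finset.card_filter_le _ _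
      _ = n := by simp
  -- apply the key lemma for each j
  have hkeyj : ∀ j : J,
      Summable (fun kb : Fin n → (Fin d → ℤ) => ‖deltaIter r ε kb (u j)‖) ∧
      ∑' kb : Fin n → (Fin d → ℤ), ‖deltaIter r ε kb (u j)‖
        ≤ (∏ l, (if ε l = 0 then ρ * (2 * (θ₁ * ν j)) else 2 * (θ₁ * ν j))) * ‖u j‖ := by
    intro j
    refine key_lemma w hwnorm c hc r hr ρ hρ hrnorm
      (fun i k => w i k * u j ≠ u j * w i k ∨ star (w i k) * u j ≠ u j * star (w i k))
      (fun i => (hfin i j).1) (fun i => m i * ν j)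
      (fun i => mul_nonneg (hm i) (hν j)) (fun i => (hfin i j).2)
      (θ₁ * ν j) (by simpa [mul_assoc] using hθ.mul_right (ν j))
      hwcomm hwcommstar n ε hε (u j) ?_
    intro i k h
    have h1 : w i k * u j = u j * w i k := by
      by_contra hcon
      exact h (Or.inl hcon)
    have h2 : star (w i k) * u j = u j * star (w i k) := by
      by_contra hcon
      exact h (Or.inr hcon)
    exact ⟨h1, h2⟩
  -- evaluate the product
  have hprod : ∀ j : J,
      (∏ l, (if ε l = 0 then ρ * (2 * (θ₁ * ν j)) else 2 * (θ₁ * ν j)))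
        = ρ ^ p * ((2 * θ₁) ^ n * ν j ^ n) := by
    intro j
    set C : ℝ := 2 * (θ₁ * ν j) with hC
    rw [Finset.prod_ite, Finset.prod_const, Finset.prod_const]
    have hq : (Finset.univ.filter fun l : Fin n => ε l = 0).card
        + (Finset.univ.filter fun l : Fin n => ¬ (ε l = 0)).card = n := by
      rw [Finset.card_filter_add_card_filter_not]
      simp
    rw [← hp] at hq
    calc (ρ * C) ^ (Finset.univ.filter fun l : Fin n => ε l = 0).card
          * C ^ (Finset.univ.filter fun l : Fin n => ¬ (ε l = 0)).card
        = (ρ * C) ^ p * C ^ (Finset.univ.filter fun l : Fin n => ¬ (ε l = 0)).card := by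
          rw [hp]
      _ = ρ ^ p * C ^ (p + (Finset.univ.filter fun l : Fin n => ¬ (ε l = 0)).card) := by
          rw [mul_pow, pow_add]; ring
      _ = ρ ^ p * C ^ n := by rw [hq]
      _ = ρ ^ p * ((2 * θ₁) ^ n * ν j ^ n) := by
          rw [show C = (2 * θ₁) * ν j by rw [hC]; ring, mul_pow]
  have hEj : ∀ j : J, ∑' kb : Fin n → (Fin d → ℤ), ‖deltaIter r ε kb (u j)‖
      ≤ ρ ^ p * ((2 * θ₁) ^ n * ν j ^ n) := by
    intro j
    have hprodnn : 0 ≤ ρ ^ p * ((2 * θ₁) ^ n * ν j ^ n) := by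
      have := hν j
      positivity
    calc ∑' kb : Fin n → (Fin d → ℤ), ‖deltaIter r ε kb (u j)‖
        ≤ (∏ l, (if ε l = 0 then ρ * (2 * (θ₁ * ν j)) else 2 * (θ₁ * ν j))) * ‖u j‖ :=
          (hkeyj j).2
      _ = (ρ ^ p * ((2 * θ₁) ^ n * ν j ^ n)) * ‖u j‖ := by rw [hprod j]
      _ ≤ (ρ ^ p * ((2 * θ₁) ^ n * ν j ^ n)) * 1 :=
          mul_le_mul_of_nonneg_left (hunorm j) hprodnn
      _ = ρ ^ p * ((2 * θ₁) ^ n * ν j ^ n) := mul_one _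
  -- decompose x
  have hdecomp : ∀ kb : Fin n → (Fin d → ℤ),
      deltaIter r ε kb x = ∑ j ∈ F, dcoef j • deltaIter r ε kb (u j) := by
    intro kb
    rw [hx, deltaIter_sum]
    exact Finset.sum_congr rfl fun j _ => deltaIter_smul r ε kb (dcoef j) (u j)
  have hpt : ∀ kb : Fin n → (Fin d → ℤ),
      ‖deltaIter r ε kb x‖ ≤ ∑ j ∈ F, ‖dcoef j‖ * ‖deltaIter r ε kb (u j)‖ := by
    intro kb
    rw [hdecomp kb]
    refine (norm_sum_le _ _).trans ?_
    exact Finset.sum_le_sum fun j _ => le_of_eq (norm_smul _ _)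
  have hmajsum : Summable (fun kb : Fin n → (Fin d → ℤ) =>
      ∑ j ∈ F, ‖dcoef j‖ * ‖deltaIter r ε kb (u j)‖) :=
    summable_sum fun j _ => ((hkeyj j).1.mul_left _)
  have hsummain : Summable (fun kb : Fin n → (Fin d → ℤ) => ‖deltaIter r ε kb x‖) :=
    Summable.of_nonneg_of_le (fun _ => norm_nonneg _) hpt hmajsum
  have hbound : ∑' kb : Fin n → (Fin d → ℤ), ‖deltaIter r ε kb x‖
      ≤ ρ ^ p * (2 * θ₁ * cx) ^ n := by
    calc ∑' kb : Fin n → (Fin d → ℤ), ‖deltaIter r ε kb x‖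
        ≤ ∑' kb : Fin n → (Fin d → ℤ), ∑ j ∈ F, ‖dcoef j‖ * ‖deltaIter r ε kb (u j)‖ :=
          Summable.tsum_le_tsum hpt hsummain hmajsum
      _ = ∑ j ∈ F, ∑' kb : Fin n → (Fin d → ℤ), ‖dcoef j‖ * ‖deltaIter r ε kb (u j)‖ :=
          Summable.tsum_finsetSum fun j _ => ((hkeyj j).1.mul_left _)
      _ = ∑ j ∈ F, ‖dcoef j‖ * ∑' kb : Fin n → (Fin d → ℤ), ‖deltaIter r ε kb (u j)‖ :=
          Finset.sum_congr rfl fun j _ => tsum_mul_left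
      _ ≤ ∑ j ∈ F, ‖dcoef j‖ * (ρ ^ p * ((2 * θ₁) ^ n * ν j ^ n)) :=
          Finset.sum_le_sum fun j _ =>
            mul_le_mul_of_nonneg_left (hEj j) (norm_nonneg _)
      _ = ρ ^ p * (2 * θ₁) ^ n * ∑ j ∈ F, ‖dcoef j‖ * ν j ^ n := by
          rw [Finset.mul_sum]
          exact Finset.sum_congr rfl fun j _ => by ring
      _ ≤ ρ ^ p * (2 * θ₁) ^ n * cx ^ n := by
          refine mul_le_mul_of_nonneg_left (hcx n hn) ?_
          positivity
      _ = ρ ^ p * (2 * θ₁ * cx) ^ n := by rw [mul_pow (2 * θ₁) cx, mul_assoc]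
  refine ⟨hsummain, hbound, hbound.trans ?_⟩
  have h1 : ρ ^ p ≤ (1 + ρ) ^ n := by
    calc ρ ^ p ≤ (1 + ρ) ^ p := pow_le_pow_left₀ hρ (by linarith) p
      _ ≤ (1 + ρ) ^ n := pow_le_pow_right₀ (by linarith) hpn
  refine mul_le_mul_of_nonneg_right h1 ?_
  positivity
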